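/- Let ω = e^{2πi/3}, and for l ∈ {0,1,2} define |ψ_l⟩ = (|00⟩ + ω^l|11⟩ + ω^{2l}|22⟩)/√3 and |Ψ_l⟩ = |ψ_l⟩^{⊗3} ∈ (ℂ^3)^{⊗6}. For any α_0,α_1,α_2 ∈ ℂ with Σ_l |α_l|^2 = 1, the state |Ψ⟩ = Σ_{l=0}^{2} α_l |Ψ_l⟩ has reduced density matrix I_3/3 on each of the six ℂ^3 factors. -/

import Mathlib

def g6 (a b c : Fin 3) : Fin 6 → Fin 3 := ![a, a, b, b, c, c]

@[simp] lemma g6_0 (a b c : Fin 3) : g6 a b c 0 = a := rfl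
@[simp] lemma g6_1 (a b c : Fin 3) : g6 a b c 1 = a := rfl
@[simp] lemma g6_2 (a b c : Fin 3) : g6 a b c 2 = b := rfl
@[simp] lemma g6_3 (a b c : Fin 3) : g6 a b c 3 = b := rfl
@[simp] lemma g6_4 (a b c : Fin 3) : g6 a b c 4 = c := rfl
@[simp] lemma g6_5 (a b c : Fin 3) : g6 a b c 5 = c := rfl
@[simp] lemma g6_0' (a b c : Fin 3) (h : (0:ℕ) < 6) : g6 a b c ⟨0, h⟩ = a := rfl
@[simp] lemma g6_1' (a b c : Fin 3) (h : (1:ℕ) < 6) : g6 a b c ⟨1, h⟩ = a := rfl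
@[simp] lemma g6_2' (a b c : Fin 3) (h : (2:ℕ) < 6) : g6 a b c ⟨2, h⟩ = b := rfl
@[simp] lemma g6_3' (a b c : Fin 3) (h : (3:ℕ) < 6) : g6 a b c ⟨3, h⟩ = b := rfl
@[simp] lemma g6_4' (a b c : Fin 3) (h : (4:ℕ) < 6) : g6 a b c ⟨4, h⟩ = c := rfl
@[simp] lemma g6_5' (a b c : Fin 3) (h : (5:ℕ) < 6) : g6 a b c ⟨5, h⟩ = c := rfl

/-- Masking a qutrit into six qutrits: with `ω = exp(2πi/3)`,
`|ψ_l⟩ = (|00⟩+ω^l|11⟩+ω^{2l}|22⟩)/√3`, `|Ψ_l⟩ = |ψ_l⟩^{⊗3} ∈ (ℂ³)^{⊗6}` and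
`|Ψ⟩ = ∑ l α_l |Ψ_l⟩` with `∑ |α_l|² = 1`, every single-factor reduced density
matrix of `|Ψ⟩⟨Ψ|` equals `I₃/3`. -/
theorem stmt_6 (ω : ℂ) (hω : ω = Complex.exp (2 * Real.pi * Complex.I / 3))
    (α : Fin 3 → ℂ) (hα : (∑ l : Fin 3, ‖α l‖ ^ 2) = 1)
    (Ψl : Fin 3 → (Fin 6 → Fin 3) → ℂ)
    (hΨl : ∀ (l : Fin 3) (f : Fin 6 → Fin 3),
      Ψl l f = if f 0 = f 1 ∧ f 2 = f 3 ∧ f 4 = f 5 then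
        ω ^ ((l : ℕ) * ((f 0 : ℕ) + (f 2 : ℕ) + (f 4 : ℕ))) / (3 * (Real.sqrt 3 : ℂ)) else 0)
    (Ψ : (Fin 6 → Fin 3) → ℂ) (hΨ : ∀ f, Ψ f = ∑ l : Fin 3, α l * Ψl l f) :
    ∀ (j : Fin 6) (x x' : Fin 3),
      (∑ f : Fin 6 → Fin 3,
        if f j = x then Ψ f * star (Ψ (Function.update f j x')) else 0)
      = if x = x' then (1 / 3 : ℂ) else 0 := by
  -- ω facts
  have hω3 : ω ^ 3 = 1 := by
    rw [hω, ← Complex.exp_nat_mul]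
    rw [show (3:ℕ) * (2 * ↑Real.pi * Complex.I / 3) = 2 * ↑Real.pi * Complex.I by
      push_cast; ring]
    exact Complex.exp_two_pi_mul_I
  have hne : ω ≠ 1 := by
    rw [hω]
    intro h
    rw [Complex.exp_eq_one_iff] at h
    obtain ⟨n, hn⟩ := h
    have hπ : (Real.pi : ℂ) ≠ 0 := Complex.ofReal_ne_zero.mpr Real.pi_ne_zero
    have hz : (2 * (Real.pi:ℂ) * Complex.I) ≠ 0 :=
      mul_ne_zero (mul_ne_zero two_ne_zero hπ) Complex.I_ne_zero
    have h3 : ((n * 3 : ℤ) : ℂ) = ((1:ℤ) : ℂ) := by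
      have h4 : (2 * (Real.pi:ℂ) * Complex.I) * (↑n * 3) = (2 * (Real.pi:ℂ) * Complex.I) * 1 := by
        field_simp at hn
        linear_combination (-(2 * (Real.pi:ℂ) * Complex.I)) * hn
      have := mul_left_cancel₀ hz h4
      push_cast
      exact this
    have : n * 3 = 1 := by exact_mod_cast h3
    omega
  have hωsum : 1 + ω + ω ^ 2 = 0 := by
    have hfac : (ω - 1) * (1 + ω + ω ^ 2) = 0 := by linear_combination hω3
    rcases mul_eq_zero.mp hfac with h | h
    · exact absurd (by linear_combination h) hne
    · exact h
  have habs : ‖ω‖ = 1 := by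
    rw [hω, show (2 * ↑Real.pi * Complex.I / 3 : ℂ) = ((2 * Real.pi / 3 : ℝ) : ℂ) * Complex.I by
      push_cast; ring]
    exact Complex.norm_exp_ofReal_mul_I _
  have hω0 : ω ≠ 0 := by
    intro h; rw [h] at habs; simp at habs
  have hconj : (starRingEnd ℂ) ω = ω ^ 2 := by
    have h1 : ω * (starRingEnd ℂ) ω = 1 := by
      rw [Complex.mul_conj]
      norm_cast
      rw [Complex.normSq_eq_norm_sq, habs]; norm_num
    have h2 : ω * ω ^ 2 = 1 := by linear_combination hω3
    exact mul_left_cancel₀ hω0 (h1.trans h2.symm)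
  have hred : ∀ n : ℕ, ω ^ n = ω ^ (n % 3) := by
    intro n
    conv_lhs => rw [← Nat.div_add_mod n 3]
    rw [pow_add, pow_mul, hω3, one_pow, one_mul]
  -- α fact
  have hα' : α 0 * (starRingEnd ℂ) (α 0) + α 1 * (starRingEnd ℂ) (α 1)
      + α 2 * (starRingEnd ℂ) (α 2) = 1 := by
    have h0 : ∀ l : Fin 3, α l * (starRingEnd ℂ) (α l) = ((‖α l‖ ^ 2 : ℝ) : ℂ) := by
      intro l
      rw [Complex.mul_conj]
      norm_cast
      rw [Complex.normSq_eq_norm_sq]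
    rw [h0, h0, h0]
    rw [Fin.sum_univ_three] at hα
    push_cast
    exact_mod_cast congrArg (Complex.ofReal) hα
  -- the key single-pair amplitude function
  let F : ℕ → ℂ := fun s =>
    (∑ l : Fin 3, α l * ω ^ ((l : ℕ) * s)) *
      (starRingEnd ℂ) (∑ l : Fin 3, α l * ω ^ ((l : ℕ) * s))
  have hFdef : ∀ s, F s = (∑ l : Fin 3, α l * ω ^ ((l : ℕ) * s)) *
      (starRingEnd ℂ) (∑ l : Fin 3, α l * ω ^ ((l : ℕ) * s)) := fun s => rfl
  have hFexp : ∀ s : ℕ, F s = ∑ l : Fin 3, ∑ m : Fin 3,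
      (α l * (starRingEnd ℂ) (α m)) * ω ^ (((l : ℕ) * s + 2 * ((m : ℕ) * s)) % 3) := by
    intro s
    rw [hFdef, map_sum, Finset.sum_mul_sum]
    refine Finset.sum_congr rfl fun l _ => Finset.sum_congr rfl fun m _ => ?_
    rw [map_mul, map_pow, hconj, ← pow_mul, mul_mul_mul_comm, ← pow_add, hred]
  have hFmod : ∀ s : ℕ, F s = F (s % 3) := by
    intro s
    rw [hFexp, hFexp]
    refine Finset.sum_congr rfl fun l _ => Finset.sum_congr rfl fun m _ => ?_
    congr 2
    conv_lhs => rw [Nat.add_mod, Nat.mul_mod, Nat.mul_mod 2 ((m:ℕ)*s) 3,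
      Nat.mul_mod (m:ℕ) s 3]
    conv_rhs => rw [Nat.add_mod, Nat.mul_mod, Nat.mod_mod_of_dvd _ dvd_rfl,
      Nat.mul_mod 2 ((m:ℕ)*(s%3)) 3, Nat.mul_mod (m:ℕ) (s%3) 3,
      Nat.mod_mod_of_dvd _ dvd_rfl]
  have hFsum : F 0 + F 1 + F 2 = 3 := by
    rw [hFexp 0, hFexp 1, hFexp 2]
    simp only [Fin.sum_univ_three, Fin.val_zero, Fin.val_one, Fin.val_two]
    norm_num
    linear_combination 3 * hα' +
      (α 0 * (starRingEnd ℂ) (α 1) + α 0 * (starRingEnd ℂ) (α 2)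
        + α 1 * (starRingEnd ℂ) (α 0) + α 1 * (starRingEnd ℂ) (α 2)
        + α 2 * (starRingEnd ℂ) (α 0) + α 2 * (starRingEnd ℂ) (α 1)) * hωsum
  have K : ∀ x : Fin 3, (∑ b : Fin 3, ∑ c : Fin 3, F ((x:ℕ) + (b:ℕ) + (c:ℕ))) = 9 := by
    intro x
    fin_cases x <;>
    · simp only [Fin.sum_univ_three, Fin.val_zero, Fin.val_one, Fin.val_two]
      norm_num
      simp only [show F 3 = F 0 from hFmod 3, show F 4 = F 1 from hFmod 4,
        show F 5 = F 2 from hFmod 5, show F 6 = F 0 from hFmod 6]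
      linear_combination 3 * hFsum
  have K2 : ∀ x : Fin 3, (∑ a : Fin 3, ∑ c : Fin 3, F ((a:ℕ) + (x:ℕ) + (c:ℕ))) = 9 := by
    intro x
    fin_cases x <;>
    · simp only [Fin.sum_univ_three, Fin.val_zero, Fin.val_one, Fin.val_two]
      norm_num
      simp only [show F 3 = F 0 from hFmod 3, show F 4 = F 1 from hFmod 4,
        show F 5 = F 2 from hFmod 5, show F 6 = F 0 from hFmod 6]
      linear_combination 3 * hFsum
  have K3 : ∀ x : Fin 3, (∑ a : Fin 3, ∑ b : Fin 3, F ((a:ℕ) + (b:ℕ) + (x:ℕ))) = 9 := by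
    intro x
    fin_cases x <;>
    · simp only [Fin.sum_univ_three, Fin.val_zero, Fin.val_one, Fin.val_two]
      norm_num
      simp only [show F 3 = F 0 from hFmod 3, show F 4 = F 1 from hFmod 4,
        show F 5 = F 2 from hFmod 5, show F 6 = F 0 from hFmod 6]
      linear_combination 3 * hFsum
  -- vanishing off the paired configurations
  have L0 : ∀ f : Fin 6 → Fin 3, ¬(f 0 = f 1 ∧ f 2 = f 3 ∧ f 4 = f 5) → Ψ f = 0 := by
    intro f hp
    rw [hΨ]
    apply Finset.sum_eq_zero
    intro l _
    rw [hΨl, if_neg hp, mul_zero]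
  -- value on paired configurations
  have h33 : ((Real.sqrt 3 : ℝ) : ℂ) * ((Real.sqrt 3 : ℝ) : ℂ) = 3 := by
    rw [← Complex.ofReal_mul, Real.mul_self_sqrt (by norm_num : (0:ℝ) ≤ 3)]
    norm_num
  have hconj33 : (starRingEnd ℂ) (3 * ((Real.sqrt 3 : ℝ) : ℂ)) = 3 * ((Real.sqrt 3 : ℝ) : ℂ) := by
    rw [map_mul, Complex.conj_ofReal,
      show (3:ℂ) = ((3:ℝ):ℂ) by norm_num, Complex.conj_ofReal]
  have hΨg : ∀ a b c : Fin 3, Ψ (g6 a b c) =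
      (∑ l : Fin 3, α l * ω ^ ((l : ℕ) * ((a:ℕ) + (b:ℕ) + (c:ℕ)))) / (3 * ((Real.sqrt 3:ℝ) : ℂ)) := by
    intro a b c
    rw [hΨ, Finset.sum_div]
    refine Finset.sum_congr rfl fun l _ => ?_
    rw [hΨl, if_pos (by simp : g6 a b c 0 = g6 a b c 1 ∧ g6 a b c 2 = g6 a b c 3 ∧ g6 a b c 4 = g6 a b c 5)]
    simp only [g6_0, g6_2, g6_4]
    rw [mul_div_assoc]
  have hV : ∀ a b c : Fin 3, Ψ (g6 a b c) * (starRingEnd ℂ) (Ψ (g6 a b c))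
      = F ((a:ℕ) + (b:ℕ) + (c:ℕ)) / 27 := by
    intro a b c
    rw [hΨg, map_div₀, hconj33, div_mul_div_comm, hFdef]
    congr 1
    push_cast
    linear_combination (9 : ℂ) * h33
  -- main proof
  intro j x x'
  simp only [RCLike.star_def]
  by_cases hxx : x = x'
  · subst hxx
    rw [if_pos rfl]
    have hcg : ∀ f : Fin 6 → Fin 3,
        (if f j = x then Ψ f * (starRingEnd ℂ) (Ψ (Function.update f j x)) else 0)
        = (if f j = x then Ψ f * (starRingEnd ℂ) (Ψ f) else 0) := by
      intro f
      by_cases h : f j = x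
      · rw [if_pos h, if_pos h, ← h, Function.update_eq_self]
      · rw [if_neg h, if_neg h]
    rw [Finset.sum_congr rfl (fun f _ => hcg f)]
    -- restrict to paired configurations
    have hz : ∀ f ∈ (Finset.univ : Finset (Fin 6 → Fin 3)),
        f ∉ Finset.univ.image (fun p : Fin 3 × Fin 3 × Fin 3 => g6 p.1 p.2.1 p.2.2) →
        (if f j = x then Ψ f * (starRingEnd ℂ) (Ψ f) else 0) = 0 := by
      intro f _ hfS
      have hp : ¬(f 0 = f 1 ∧ f 2 = f 3 ∧ f 4 = f 5) := by
        intro hp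
        apply hfS
        refine Finset.mem_image.mpr ⟨(f 0, f 2, f 4), Finset.mem_univ _, ?_⟩
        funext i
        fin_cases i <;> simp only [g6_0', g6_1', g6_2', g6_3', g6_4', g6_5'] <;>
          first | rfl | exact hp.1 | exact hp.2.1 | exact hp.2.2 | exact hp.1.symm | exact hp.2.1.symm | exact hp.2.2.symm
      rw [L0 f hp]
      split <;> simp
    have hinj : ∀ p ∈ (Finset.univ : Finset (Fin 3 × Fin 3 × Fin 3)),
        ∀ q ∈ (Finset.univ : Finset (Fin 3 × Fin 3 × Fin 3)),
        g6 p.1 p.2.1 p.2.2 = g6 q.1 q.2.1 q.2.2 → p = q := by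
      intro p _ q _ h
      have h0 := congrFun h 0
      have h2 := congrFun h 2
      have h4 := congrFun h 4
      simp only [g6_0, g6_2, g6_4] at h0 h2 h4
      exact Prod.ext h0 (Prod.ext h2 h4)
    rw [← Finset.sum_subset (Finset.subset_univ _) hz, Finset.sum_image hinj]
    rw [Fintype.sum_prod_type]
    simp only [Fintype.sum_prod_type]
    have pull : ∀ (P : Prop) [Decidable P] (h : Fin 3 → ℂ),
        (∑ c : Fin 3, if P then h c else 0) = if P then ∑ c : Fin 3, h c else 0 := by
      intros P _ h
      split <;> simp
    fin_cases j <;>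
      simp only [g6_0, g6_1, g6_2, g6_3, g6_4, g6_5, g6_0', g6_1', g6_2', g6_3', g6_4',
        g6_5', hV, pull, Finset.sum_ite_eq', Finset.mem_univ, if_true, ← Finset.sum_div]
    · rw [K x]; norm_num
    · rw [K x]; norm_num
    · rw [K2 x]; norm_num
    · rw [K2 x]; norm_num
    · rw [K3 x]; norm_num
    · rw [K3 x]; norm_num
  · rw [if_neg hxx]
    apply Finset.sum_eq_zero
    intro f _
    by_cases h1 : f j = x
    · rw [if_pos h1]
      by_cases hp : f 0 = f 1 ∧ f 2 = f 3 ∧ f 4 = f 5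
      · have hzero : Ψ (Function.update f j x') = 0 := by
          apply L0
          fin_cases j <;>
            simp (config := { decide := true }) only [Function.update_apply] <;>
            simp only [if_true, if_false] <;> intro hc <;> apply hxx
          · rw [← h1]; exact hp.1.trans hc.1.symm
          · rw [← h1]; exact hp.1.symm.trans hc.1
          · rw [← h1]; exact hp.2.1.trans hc.2.1.symm
          · rw [← h1]; exact hp.2.1.symm.trans hc.2.1
          · rw [← h1]; exact hp.2.2.trans hc.2.2.symm
          · rw [← h1]; exact hp.2.2.symm.trans hc.2.2
        rw [hzero, map_zero, mul_zero]
      · rw [L0 f hp, zero_mul]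
    · rw [if_neg h1]
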